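/- Let F₁ > 0, F₂ ≥ 0, A > 1, F(x) = F₁ for 0 ≤ x < A, F(x) = F₂ for x ≥ A, and let v ∈ C¹([0,1]) with v(x) ≥ 0 for all x ∈ [0,1]. Set D(x) = v(x)² + 2F₁(A − x). Then there are no collisions on [0,∞) if and only if for all x ∈ [0,1] both of the following inequalities hold: (i) −2(A − x)v'(x) < v(x) + √(D(x)); (ii) v'(x)·((F₁ − F₂)v(x) + F₂√(D(x))) ≥ F₁(F₁ − F₂). -/

import Mathlib

open Set

noncomputable def stepTraj (F₁ F₂ A : ℝ) (v : ℝ → ℝ) (x t : ℝ) : ℝ :=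
  let T := (-(v x) + Real.sqrt (v x ^ 2 + 2 * F₁ * (A - x))) / F₁
  if t ≤ T then x + v x * t + F₁ * t ^ 2 / 2
  else A + (v x + F₁ * T) * (t - T) + F₂ * (t - T) ^ 2 / 2

noncomputable def uA (F₁ A : ℝ) (v : ℝ → ℝ) (x : ℝ) : ℝ :=
  Real.sqrt (v x ^ 2 + 2 * F₁ * (A - x))

noncomputable def tA (F₁ A : ℝ) (v : ℝ → ℝ) (x : ℝ) : ℝ :=
  (uA F₁ A v x - v x) / F₁

section basics
variable {F₁ F₂ A : ℝ} {v : ℝ → ℝ} {x t : ℝ}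

lemma uA_sq (hF₁ : 0 < F₁) (hxA : x < A) :
    (uA F₁ A v x) ^ 2 = v x ^ 2 + 2 * F₁ * (A - x) :=
  Real.sq_sqrt (by nlinarith [sq_nonneg (v x)])

lemma v_lt_uA (hF₁ : 0 < F₁) (hv0 : 0 ≤ v x) (hxA : x < A) : v x < uA F₁ A v x := by
  have h := uA_sq (v := v) hF₁ hxA
  have h0 : 0 ≤ uA F₁ A v x := Real.sqrt_nonneg _
  nlinarith [mul_pos hF₁ (sub_pos.2 hxA)]

lemma uA_pos (hF₁ : 0 < F₁) (hv0 : 0 ≤ v x) (hxA : x < A) : 0 < uA F₁ A v x :=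
  lt_of_le_of_lt hv0 (v_lt_uA hF₁ hv0 hxA)

lemma tA_pos (hF₁ : 0 < F₁) (hv0 : 0 ≤ v x) (hxA : x < A) : 0 < tA F₁ A v x :=
  div_pos (sub_pos.2 (v_lt_uA hF₁ hv0 hxA)) hF₁

lemma stepTraj_of_le (hF₁ : 0 < F₁) (h : t ≤ tA F₁ A v x) :
    stepTraj F₁ F₂ A v x t = x + v x * t + F₁ * t ^ 2 / 2 := by
  have e : (-(v x) + Real.sqrt (v x ^ 2 + 2 * F₁ * (A - x))) / F₁ = tA F₁ A v x := by
    unfold tA uA; ring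
  simp only [stepTraj, e, if_pos h]

lemma stepTraj_of_gt (hF₁ : 0 < F₁) (h : tA F₁ A v x < t) :
    stepTraj F₁ F₂ A v x t =
      A + uA F₁ A v x * (t - tA F₁ A v x) + F₂ * (t - tA F₁ A v x) ^ 2 / 2 := by
  have e : (-(v x) + Real.sqrt (v x ^ 2 + 2 * F₁ * (A - x))) / F₁ = tA F₁ A v x := by
    unfold tA uA; ring
  have e2 : v x + F₁ * tA F₁ A v x = uA F₁ A v x := by
    unfold tA; field_simp; ring
  simp only [stepTraj, e, if_neg (not_le.2 h), e2]

lemma phase1_at_T (hF₁ : 0 < F₁) (hxA : x < A) :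
    x + v x * tA F₁ A v x + F₁ * tA F₁ A v x ^ 2 / 2 = A := by
  have hs := uA_sq (v := v) hF₁ hxA
  unfold tA
  field_simp
  nlinarith [hs]

lemma stepTraj_cont (hF₁ : 0 < F₁) (hv0 : 0 ≤ v x) (hxA : x < A) :
    Continuous (fun t => stepTraj F₁ F₂ A v x t) := by
  have hfe : (fun t => stepTraj F₁ F₂ A v x t) =
      fun t => if t ≤ tA F₁ A v x then x + v x * t + F₁ * t ^ 2 / 2
        else A + uA F₁ A v x * (t - tA F₁ A v x) + F₂ * (t - tA F₁ A v x) ^ 2 / 2 := by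
    funext t
    rcases le_or_gt t (tA F₁ A v x) with h | h
    · rw [stepTraj_of_le hF₁ h, if_pos h]
    · rw [stepTraj_of_gt hF₁ h, if_neg (not_le.2 h)]
  rw [hfe]
  refine Continuous.if_le (by fun_prop) (by fun_prop) continuous_id continuous_const ?_
  intro t ht
  have ht : t = tA F₁ A v x := ht
  subst ht
  simpa using phase1_at_T (F₁ := F₁) (v := v) hF₁ hxA

lemma stepTraj_zero (hF₁ : 0 < F₁) (hv0 : 0 ≤ v x) (hxA : x < A) :
    stepTraj F₁ F₂ A v x 0 = x := by
  rw [stepTraj_of_le hF₁ (le_of_lt (tA_pos hF₁ hv0 hxA))]; ring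

lemma phase1_lt_A (hF₁ : 0 < F₁) (hv0 : 0 ≤ v x) (hxA : x < A)
    (ht0 : 0 ≤ t) (htT : t < tA F₁ A v x) :
    x + v x * t + F₁ * t ^ 2 / 2 < A := by
  have h := phase1_at_T (v := v) (x := x) hF₁ hxA
  nlinarith [mul_nonneg hv0 (sub_pos.2 htT).le, mul_pos hF₁ (mul_pos (sub_pos.2 htT)
    (show 0 < tA F₁ A v x + t by nlinarith))]

lemma phase1_le_A (hF₁ : 0 < F₁) (hv0 : 0 ≤ v x) (hxA : x < A)
    (ht0 : 0 ≤ t) (htT : t ≤ tA F₁ A v x) :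
    x + v x * t + F₁ * t ^ 2 / 2 ≤ A := by
  rcases lt_or_eq_of_le htT with h | h
  · exact (phase1_lt_A hF₁ hv0 hxA ht0 h).le
  · subst h; exact le_of_eq (phase1_at_T hF₁ hxA)

lemma tA_mul (hF₁ : 0 < F₁) : F₁ * tA F₁ A v x = uA F₁ A v x - v x := by
  unfold tA; field_simp

/-- Backward core: order preservation for a single pair. -/
lemma pair_lt {x₁ x₂ : ℝ} (hF₁ : 0 < F₁) (hF₂ : 0 ≤ F₂)
    (h12 : x₁ < x₂) (hv₁ : 0 ≤ v x₁) (hv₂ : 0 ≤ v x₂) (hA₁ : x₁ < A) (hA₂ : x₂ < A)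
    (hT : tA F₁ A v x₂ < tA F₁ A v x₁)
    (hw : (F₁ - F₂) * uA F₁ A v x₁ + F₂ * v x₁ ≤ (F₁ - F₂) * uA F₁ A v x₂ + F₂ * v x₂)
    (ht : 0 ≤ t) :
    stepTraj F₁ F₂ A v x₁ t < stepTraj F₁ F₂ A v x₂ t := by
  have e1 : F₁ * tA F₁ A v x₁ = uA F₁ A v x₁ - v x₁ := tA_mul hF₁
  have e2 : F₁ * tA F₁ A v x₂ = uA F₁ A v x₂ - v x₂ := tA_mul hF₁
  have hT₂0 : 0 < tA F₁ A v x₂ := tA_pos hF₁ hv₂ hA₂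
  rcases le_or_gt t (tA F₁ A v x₂) with h2 | h2
  · have h1 : t ≤ tA F₁ A v x₁ := le_trans h2 hT.le
    rw [stepTraj_of_le (F₂ := F₂) hF₁ h1, stepTraj_of_le (F₂ := F₂) hF₁ h2]
    have hA2eq : x₂ + v x₂ * tA F₁ A v x₂ + F₁ * tA F₁ A v x₂ ^ 2 / 2 = A :=
      phase1_at_T hF₁ hA₂
    have hltA : x₁ + v x₁ * tA F₁ A v x₂ + F₁ * tA F₁ A v x₂ ^ 2 / 2 < A :=
      phase1_lt_A hF₁ hv₁ hA₁ hT₂0.le hT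
    have hL : 0 < (x₂ - x₁) + (v x₂ - v x₁) * tA F₁ A v x₂ := by nlinarith
    rcases le_or_gt (v x₁) (v x₂) with hv12 | hv12
    · nlinarith [mul_nonneg (sub_nonneg.2 hv12) ht]
    · nlinarith [mul_nonneg (sub_nonneg.2 h2) (sub_pos.2 hv12).le]
  · rcases le_or_gt t (tA F₁ A v x₁) with h1 | h1
    · rw [stepTraj_of_le (F₂ := F₂) hF₁ h1, stepTraj_of_gt hF₁ h2]
      have hle : x₁ + v x₁ * t + F₁ * t ^ 2 / 2 ≤ A := phase1_le_A hF₁ hv₁ hA₁ ht h1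
      have hs₂ : 0 < uA F₁ A v x₂ := uA_pos hF₁ hv₂ hA₂
      nlinarith [mul_pos hs₂ (sub_pos.2 h2), mul_nonneg hF₂ (sq_nonneg (t - tA F₁ A v x₂))]
    · rw [stepTraj_of_gt hF₁ h1, stepTraj_of_gt hF₁ h2]
      have hm : 0 ≤ uA F₁ A v x₂ - uA F₁ A v x₁ + F₂ * (tA F₁ A v x₁ - tA F₁ A v x₂) := by
        have key : F₁ * (uA F₁ A v x₂ - uA F₁ A v x₁ + F₂ * (tA F₁ A v x₁ - tA F₁ A v x₂))
            = ((F₁ - F₂) * uA F₁ A v x₂ + F₂ * v x₂)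
              - ((F₁ - F₂) * uA F₁ A v x₁ + F₂ * v x₁) := by
          linear_combination F₂ * e1 - F₂ * e2
        by_contra h; push_neg at h
        nlinarith [mul_pos hF₁ (neg_pos.2 h)]
      have ha : 0 < t - tA F₁ A v x₁ := sub_pos.2 h1
      have hΔ : 0 < tA F₁ A v x₁ - tA F₁ A v x₂ := sub_pos.2 hT
      have hs₂ : 0 < uA F₁ A v x₂ := uA_pos hF₁ hv₂ hA₂
      nlinarith [mul_nonneg ha.le hm, mul_pos hΔ hs₂,
        mul_nonneg (mul_nonneg hF₂ hΔ.le) hΔ.le]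

/-- Forward core: no collisions forces `w` to be monotone. -/
lemma w_mono_of_noCollision (hF₁ : 0 < F₁) (hF₂ : 0 ≤ F₂) (hA : 1 < A)
    (hvnn : ∀ x ∈ Icc (0:ℝ) 1, 0 ≤ v x)
    (hNC : ∀ t, 0 ≤ t → ∀ x₁ ∈ Icc (0:ℝ) 1, ∀ x₂ ∈ Icc (0:ℝ) 1, x₁ ≠ x₂ →
        stepTraj F₁ F₂ A v x₁ t ≠ stepTraj F₁ F₂ A v x₂ t)
    {x₁ x₂ : ℝ} (hx₁ : x₁ ∈ Icc (0:ℝ) 1) (hx₂ : x₂ ∈ Icc (0:ℝ) 1) (h12 : x₁ < x₂) :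
    (F₁ - F₂) * uA F₁ A v x₁ + F₂ * v x₁ ≤ (F₁ - F₂) * uA F₁ A v x₂ + F₂ * v x₂ := by
  by_contra hlt; push_neg at hlt
  have hA₁ : x₁ < A := lt_of_le_of_lt hx₁.2 hA
  have hA₂ : x₂ < A := lt_of_le_of_lt hx₂.2 hA
  have hv₁ := hvnn x₁ hx₁
  have hv₂ := hvnn x₂ hx₂
  have e1 : F₁ * tA F₁ A v x₁ = uA F₁ A v x₁ - v x₁ := tA_mul hF₁
  have e2 : F₁ * tA F₁ A v x₂ = uA F₁ A v x₂ - v x₂ := tA_mul hF₁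
  set s₁ := uA F₁ A v x₁ with hs₁def
  set s₂ := uA F₁ A v x₂ with hs₂def
  set T₁ := tA F₁ A v x₁ with hT₁def
  set T₂ := tA F₁ A v x₂ with hT₂def
  set m := s₂ - s₁ + F₂ * (T₁ - T₂) with hm_def
  have hmneg : m < 0 := by
    have key : F₁ * m = ((F₁ - F₂) * s₂ + F₂ * v x₂) - ((F₁ - F₂) * s₁ + F₂ * v x₁) := by
      rw [hm_def]; linear_combination F₂ * e1 - F₂ * e2
    by_contra h; push_neg at h
    nlinarith [mul_nonneg hF₁.le h]
  set c := s₁ * T₁ - s₂ * T₂ + F₂ * (T₂ ^ 2 - T₁ ^ 2) / 2 with hc_def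
  set N := max (max T₁ T₂ + 1) ((c + 1) / (-m)) with hN_def
  have hNT₁ : T₁ < N :=
    lt_of_lt_of_le (by linarith [le_max_left T₁ T₂]) (le_max_left _ _)
  have hNT₂ : T₂ < N :=
    lt_of_lt_of_le (by linarith [le_max_right T₁ T₂]) (le_max_left _ _)
  have hN0 : 0 ≤ N := le_of_lt (lt_trans (tA_pos hF₁ hv₂ hA₂) hNT₂)
  set f : ℝ → ℝ := fun t => stepTraj F₁ F₂ A v x₂ t - stepTraj F₁ F₂ A v x₁ t with hf_def
  have hfN : f N = m * N + c := by
    rw [hf_def]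
    simp only
    rw [stepTraj_of_gt hF₁ hNT₂, stepTraj_of_gt hF₁ hNT₁, ← hs₁def, ← hs₂def, ← hT₁def,
      ← hT₂def, hm_def, hc_def]
    ring
  clear_value s₁ s₂ T₁ T₂ m c N f
  have hmN : m * N + c ≤ -1 := by
    have h1 : (c + 1) / (-m) ≤ N := by rw [hN_def]; exact le_max_right _ _
    have h2 : m * N ≤ m * ((c + 1) / (-m)) := mul_le_mul_of_nonpos_left h1 hmneg.le
    have h3 : m * ((c + 1) / (-m)) = -(c + 1) := by
      rw [div_neg, mul_neg, ← mul_div_assoc, mul_div_cancel_left₀ _ hmneg.ne]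
    linarith
  have hcont : Continuous f := by
    rw [hf_def]
    exact (stepTraj_cont hF₁ hv₂ hA₂).sub (stepTraj_cont hF₁ hv₁ hA₁)
  have h0mem : (0:ℝ) ∈ Icc (f N) (f 0) := by
    constructor
    · rw [hfN]; linarith
    · rw [hf_def]; simp only
      rw [stepTraj_zero (F₂ := F₂) hF₁ hv₂ hA₂, stepTraj_zero (F₂ := F₂) hF₁ hv₁ hA₁]
      linarith
  obtain ⟨t0, ht0, hft0⟩ := intermediate_value_Icc' hN0 hcont.continuousOn h0mem
  rw [hf_def] at hft0
  exact hNC t0 ht0.1 x₁ hx₁ x₂ hx₂ (ne_of_lt h12) (sub_eq_zero.mp hft0).symm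
end basics


lemma alg_wder_to_ii (F₁ F₂ vx p s : ℝ) (hs0 : 0 < s)
    (h : 0 ≤ (F₁ - F₂) * ((vx * p - F₁) / s) + F₂ * p) :
    F₁ * (F₁ - F₂) ≤ p * ((F₁ - F₂) * vx + F₂ * s) := by
  have key : ((F₁ - F₂) * ((vx * p - F₁) / s) + F₂ * p) * s
      = p * ((F₁ - F₂) * vx + F₂ * s) - F₁ * (F₁ - F₂) := by
    field_simp; ring
  nlinarith [mul_nonneg h hs0.le]

lemma alg_ii_to_wder (F₁ F₂ vx p s : ℝ) (hs0 : 0 < s)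
    (h : F₁ * (F₁ - F₂) ≤ p * ((F₁ - F₂) * vx + F₂ * s)) :
    0 ≤ (F₁ - F₂) * ((vx * p - F₁) / s) + F₂ * p := by
  have key : ((F₁ - F₂) * ((vx * p - F₁) / s) + F₂ * p) * s
      = p * ((F₁ - F₂) * vx + F₂ * s) - F₁ * (F₁ - F₂) := by
    field_simp; ring
  by_contra hcon; push_neg at hcon
  nlinarith [mul_neg_of_neg_of_pos hcon hs0]

lemma alg_ii_to_i (F₁ F₂ B vx p s : ℝ) (hF₁ : 0 < F₁) (hF₂ : 0 ≤ F₂) (hv0 : 0 ≤ vx)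
    (hsv : vx < s) (hs2 : s ^ 2 = vx ^ 2 + 2 * F₁ * B)
    (hii : F₁ * (F₁ - F₂) ≤ p * ((F₁ - F₂) * vx + F₂ * s)) :
    -2 * B * p < vx + s := by
  have hs0 : 0 < s := lt_of_le_of_lt hv0 hsv
  have hsv0 : 0 < s + vx := by linarith
  by_contra hcon; push_neg at hcon
  -- hcon : vx + s ≤ -2 * B * p
  have hs2' : s ^ 2 - vx ^ 2 = 2 * F₁ * B := by linarith
  have hexp : (s + vx) * (F₁ + (s - vx) * p) = F₁ * (s + vx) + (2 * F₁ * B) * p := by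
    linear_combination p * hs2'
  have hle : (s + vx) * (F₁ + (s - vx) * p) ≤ 0 := by
    nlinarith [mul_le_mul_of_nonneg_left hcon hF₁.le]
  have hpsv : F₁ + (s - vx) * p ≤ 0 := by
    by_contra h'; push_neg at h'
    nlinarith [mul_pos hsv0 h']
  have hc : 0 ≤ (F₁ - F₂) * vx + F₂ * s := by
    nlinarith [mul_nonneg hF₂ (sub_pos.2 hsv).le, mul_nonneg hF₁.le hv0]
  nlinarith [mul_le_mul_of_nonneg_left hii (sub_pos.2 hsv).le,
    mul_le_mul_of_nonneg_right hpsv hc, mul_pos (mul_pos hF₁ hF₁) hs0]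

lemma alg_i_to_psider (F₁ B vx p s : ℝ) (hF₁ : 0 < F₁) (hv0 : 0 ≤ vx)
    (hsv : vx < s) (hs2 : s ^ 2 = vx ^ 2 + 2 * F₁ * B)
    (hi : -2 * B * p < vx + s) :
    (vx * p - F₁) / s - p < 0 := by
  have hs0 : 0 < s := lt_of_le_of_lt hv0 hsv
  have hsv0 : 0 < s + vx := by linarith
  have hs2' : s ^ 2 - vx ^ 2 = 2 * F₁ * B := by linarith
  have hnum : vx * p - F₁ - p * s < 0 := by
    by_contra h'; push_neg at h'
    -- h' : 0 ≤ vx * p - F₁ - p * s, i.e. F₁ ≤ p * (vx - s) = -(s - vx) * p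
    have hexp : (s + vx) * (F₁ + (s - vx) * p) = F₁ * (s + vx) + (2 * F₁ * B) * p := by
      linear_combination p * hs2'
    have h2 : F₁ * (vx + s) < F₁ * (-2 * B * p) * (-1) * (-1) := by
      nlinarith [mul_lt_mul_of_pos_left hi hF₁]
    nlinarith [mul_pos hsv0 (show 0 < F₁ + (s - vx) * p from by nlinarith),
      mul_lt_mul_of_pos_left hi hF₁]
  have : (vx * p - F₁) / s - p = (vx * p - F₁ - p * s) / s := by
    field_simp
  rw [this]
  exact div_neg_of_neg_of_pos hnum hs0

lemma deriv_nonneg_of_monotoneOn {f : ℝ → ℝ} {d x : ℝ} (hx : x ∈ Icc (0:ℝ) 1)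
    (hf : HasDerivWithinAt f d (Icc (0:ℝ) 1) x)
    (hm : ∀ a ∈ Icc (0:ℝ) 1, ∀ b ∈ Icc (0:ℝ) 1, a ≤ b → f a ≤ f b) : 0 ≤ d := by
  rw [hasDerivWithinAt_iff_tendsto_slope] at hf
  have hcl : x ∈ closure (Icc (0:ℝ) 1 \ {x}) := by
    rcases lt_or_eq_of_le hx.2 with h1 | h1
    · refine closure_mono (show Ioc x 1 ⊆ Icc (0:ℝ) 1 \ {x} from ?_) ?_
      · rintro y ⟨hy1, hy2⟩
        exact ⟨⟨le_trans hx.1 hy1.le, hy2⟩, by simp [hy1.ne']⟩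
      · rw [closure_Ioc h1.ne]; exact ⟨le_refl x, h1.le⟩
    · refine closure_mono (show Ico (0:ℝ) x ⊆ Icc (0:ℝ) 1 \ {x} from ?_) ?_
      · rintro y ⟨hy1, hy2⟩
        exact ⟨⟨hy1, le_trans hy2.le (le_of_eq h1)⟩, by simp [hy2.ne]⟩
      · rw [closure_Ico (show (0:ℝ) ≠ x from by rw [h1]; norm_num)]
        exact ⟨hx.1, le_refl x⟩
  haveI : (nhdsWithin x (Icc (0:ℝ) 1 \ {x})).NeBot := mem_closure_iff_nhdsWithin_neBot.mp hcl
  refine ge_of_tendsto hf (Filter.eventually_of_mem self_mem_nhdsWithin ?_)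
  rintro y ⟨hyI, hyx⟩
  have hxy : y ≠ x := hyx
  rcases lt_or_gt_of_ne hxy with h | h
  · rw [slope_def_field]
    exact div_nonneg_iff.mpr (Or.inr ⟨sub_nonpos.2 (hm y hyI x hx h.le), sub_nonpos.2 h.le⟩)
  · rw [slope_def_field]
    exact div_nonneg (sub_nonneg.2 (hm x hx y hyI h.le)) (sub_nonneg.2 h.le)


/-- One gap, general nonnegative `C¹` initial velocities: for `F₁ > 0`,
`F₂ ≥ 0`, `A > 1`, `v ∈ C¹([0,1])` with `v ≥ 0`, and `D(x) = v(x)² + 2F₁(A − x)`, there are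
no collisions on `[0,∞)` iff for every `x ∈ [0,1]` both
(i) `−2(A − x)v'(x) < v(x) + √(D(x))` and
(ii) `v'(x)·((F₁ − F₂)v(x) + F₂√(D(x))) ≥ F₁(F₁ − F₂)` hold. -/
theorem step_force_no_collisions_iff
    (F₁ F₂ A : ℝ) (v v' : ℝ → ℝ)
    (hF₁ : 0 < F₁) (hF₂ : 0 ≤ F₂) (hA : 1 < A)
    (hv : ∀ x ∈ Icc (0:ℝ) 1, HasDerivWithinAt v (v' x) (Icc (0:ℝ) 1) x)
    (hv'c : ContinuousOn v' (Icc (0:ℝ) 1))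
    (hvnn : ∀ x ∈ Icc (0:ℝ) 1, 0 ≤ v x) :
    (∀ t, 0 ≤ t → ∀ x₁ ∈ Icc (0:ℝ) 1, ∀ x₂ ∈ Icc (0:ℝ) 1, x₁ ≠ x₂ →
        stepTraj F₁ F₂ A v x₁ t ≠ stepTraj F₁ F₂ A v x₂ t) ↔
      (∀ x ∈ Icc (0:ℝ) 1,
        -2 * (A - x) * v' x < v x + Real.sqrt (v x ^ 2 + 2 * F₁ * (A - x)) ∧
        F₁ * (F₁ - F₂) ≤
          v' x * ((F₁ - F₂) * v x + F₂ * Real.sqrt (v x ^ 2 + 2 * F₁ * (A - x)))) := by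
  have hxA : ∀ x ∈ Icc (0:ℝ) 1, x < A := fun x hx => lt_of_le_of_lt hx.2 hA
  have hu' : ∀ x ∈ Icc (0:ℝ) 1, HasDerivWithinAt (fun y => uA F₁ A v y)
      ((v x * v' x - F₁) / uA F₁ A v x) (Icc (0:ℝ) 1) x := by
    intro x hx
    have hDpos : (0:ℝ) < v x ^ 2 + 2 * F₁ * (A - x) := by
      nlinarith [sq_nonneg (v x), hxA x hx]
    have h1 : HasDerivWithinAt (fun y => v y ^ 2) ((2:ℕ) * v x ^ 1 * v' x) (Icc (0:ℝ) 1) x :=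
        (hv x hx).pow 2
    have h2 : HasDerivWithinAt (fun y : ℝ => 2 * F₁ * (A - y)) (2 * F₁ * -1) (Icc (0:ℝ) 1) x :=
      ((hasDerivWithinAt_id x (Icc (0:ℝ) 1)).const_sub A).const_mul (2 * F₁)
    have hD : HasDerivWithinAt (fun y => v y ^ 2 + 2 * F₁ * (A - y))
        (2 * v x * v' x - 2 * F₁) (Icc (0:ℝ) 1) x := by
      exact (h1.add h2).congr_deriv (by push_cast; ring)
    have hsq := hD.sqrt (ne_of_gt hDpos)
    have hne : uA F₁ A v x ≠ 0 := (uA_pos hF₁ (hvnn x hx) (hxA x hx)).ne'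
    have heq : (v x * v' x - F₁) / uA F₁ A v x
        = (2 * v x * v' x - 2 * F₁) / (2 * Real.sqrt (v x ^ 2 + 2 * F₁ * (A - x))) := by
      rw [show Real.sqrt (v x ^ 2 + 2 * F₁ * (A - x)) = uA F₁ A v x from rfl]
      field_simp
    rw [heq]
    exact hsq
  have hψder : ∀ x ∈ Icc (0:ℝ) 1, HasDerivWithinAt (fun y => uA F₁ A v y - v y)
      ((v x * v' x - F₁) / uA F₁ A v x - v' x) (Icc (0:ℝ) 1) x :=
    fun x hx => (hu' x hx).sub (hv x hx)
  have hwder : ∀ x ∈ Icc (0:ℝ) 1, HasDerivWithinAt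
      (fun y => (F₁ - F₂) * uA F₁ A v y + F₂ * v y)
      ((F₁ - F₂) * ((v x * v' x - F₁) / uA F₁ A v x) + F₂ * v' x) (Icc (0:ℝ) 1) x :=
    fun x hx => ((hu' x hx).const_mul (F₁ - F₂)).add ((hv x hx).const_mul F₂)
  constructor
  · intro hNC x hx
    have hwmono : ∀ a ∈ Icc (0:ℝ) 1, ∀ b ∈ Icc (0:ℝ) 1, a ≤ b →
        (F₁ - F₂) * uA F₁ A v a + F₂ * v a ≤ (F₁ - F₂) * uA F₁ A v b + F₂ * v b := by
      intro a ha b hb hab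
      rcases lt_or_eq_of_le hab with h | h
      · exact w_mono_of_noCollision hF₁ hF₂ hA hvnn hNC ha hb h
      · rw [h]
    have h0w : 0 ≤ (F₁ - F₂) * ((v x * v' x - F₁) / uA F₁ A v x) + F₂ * v' x :=
      deriv_nonneg_of_monotoneOn hx (hwder x hx) hwmono
    have hs0 : 0 < uA F₁ A v x := uA_pos hF₁ (hvnn x hx) (hxA x hx)
    have hii := alg_wder_to_ii F₁ F₂ (v x) (v' x) (uA F₁ A v x) hs0 h0w
    refine ⟨?_, ?_⟩
    · exact alg_ii_to_i F₁ F₂ (A - x) (v x) (v' x) (uA F₁ A v x) hF₁ hF₂ (hvnn x hx)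
        (v_lt_uA hF₁ (hvnn x hx) (hxA x hx)) (uA_sq hF₁ (hxA x hx)) hii
    · exact hii
  · intro hcond
    have hψcont : ContinuousOn (fun y => uA F₁ A v y - v y) (Icc (0:ℝ) 1) :=
      fun x hx => (hψder x hx).continuousWithinAt
    have hwcont : ContinuousOn (fun y => (F₁ - F₂) * uA F₁ A v y + F₂ * v y) (Icc (0:ℝ) 1) :=
      fun x hx => (hwder x hx).continuousWithinAt
    have hanti : StrictAntiOn (fun y => uA F₁ A v y - v y) (Icc (0:ℝ) 1) := by
      refine strictAntiOn_of_hasDerivWithinAt_neg (convex_Icc 0 1) hψcont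
        (fun y hy => ((hψder y (interior_subset hy)).mono interior_subset)) ?_
      intro y hy
      have hyI := interior_subset hy
      exact alg_i_to_psider F₁ (A - y) (v y) (v' y) (uA F₁ A v y) hF₁ (hvnn y hyI)
        (v_lt_uA hF₁ (hvnn y hyI) (hxA y hyI)) (uA_sq hF₁ (hxA y hyI)) (hcond y hyI).1
    have hwmono : MonotoneOn (fun y => (F₁ - F₂) * uA F₁ A v y + F₂ * v y) (Icc (0:ℝ) 1) := by
      refine monotoneOn_of_hasDerivWithinAt_nonneg (convex_Icc 0 1) hwcont
        (fun y hy => ((hwder y (interior_subset hy)).mono interior_subset)) ?_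
      intro y hy
      have hyI := interior_subset hy
      exact alg_ii_to_wder F₁ F₂ (v y) (v' y) (uA F₁ A v y)
        (uA_pos hF₁ (hvnn y hyI) (hxA y hyI)) (hcond y hyI).2
    intro t ht x₁ hx₁ x₂ hx₂ hne
    have key : ∀ a ∈ Icc (0:ℝ) 1, ∀ b ∈ Icc (0:ℝ) 1, a < b →
        stepTraj F₁ F₂ A v a t < stepTraj F₁ F₂ A v b t := by
      intro a ha b hb hab
      have hTba : tA F₁ A v b < tA F₁ A v a := by
        have h := hanti ha hb hab
        unfold tA
        exact (div_lt_div_iff_of_pos_right hF₁).2 h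
      exact pair_lt hF₁ hF₂ hab (hvnn a ha) (hvnn b hb) (hxA a ha) (hxA b hb) hTba
        (hwmono ha hb hab.le) ht
    rcases hne.lt_or_gt with h | h
    · exact ne_of_lt (key x₁ hx₁ x₂ hx₂ h)
    · exact ne_of_gt (key x₂ hx₂ x₁ hx₁ h)
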